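/- Let n ≥ 1, t > 0, and let A, B, C be positive reals satisfying A ≥ B²/n (corresponding to J(X) ≥ I(X)²/n). Then the function Λ(α) = α⁴ A + (1-α)⁴ n/t² + 2α²(1-α)² B/t is convex on [0,1]. -/

import Mathlib

/-- The function `Λ(α) = α⁴A + (1-α)⁴ n/t² + 2α²(1-α)² B/t` is convex on `[0,1]`,
given `A ≥ B²/n`. -/
lemma amgm_aux (u v w : ℝ) (hu : 0 ≤ u) (hv : 0 ≤ v) (hw : 0 ≤ w) (h : w ^ 2 ≤ u * v) :
    2 * w ≤ u + v := by
  nlinarith [sq_nonneg (u - v), sq_nonneg (u + v - 2 * w), sq_nonneg (u + v)]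

theorem Lambda_convex (n : ℕ) (hn : 1 ≤ n) (t : ℝ) (ht : 0 < t)
    (A B C : ℝ) (hA : 0 < A) (hB : 0 < B) (hC : 0 < C)
    (hAB : A ≥ B ^ 2 / n) :
    ConvexOn ℝ (Set.Icc (0 : ℝ) 1)
      (fun α : ℝ => α ^ 4 * A + (1 - α) ^ 4 * (n / t ^ 2) +
        2 * α ^ 2 * (1 - α) ^ 2 * (B / t)) := by
  set c : ℝ := (n : ℝ) / t ^ 2 with hcdef
  set d : ℝ := B / t with hddef
  have hn0 : (0 : ℝ) < n := by exact_mod_cast hn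
  have hc0 : 0 < c := div_pos hn0 (pow_pos ht 2)
  have hd0 : 0 < d := div_pos hB ht
  have hcd : d ^ 2 ≤ A * c := by
    have h1 : B ^ 2 ≤ A * n := by
      rw [ge_iff_le, div_le_iff₀ hn0] at hAB
      linarith
    rw [hddef, hcdef, div_pow, mul_div_assoc']
    gcongr
  have hder1 : ∀ x : ℝ, HasDerivAt
      (fun α : ℝ => α ^ 4 * A + (1 - α) ^ 4 * c + 2 * α ^ 2 * (1 - α) ^ 2 * d)
      (4 * x ^ 3 * A - 4 * (1 - x) ^ 3 * c + (4 * x - 12 * x ^ 2 + 8 * x ^ 3) * d) x := by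
    intro x
    have h1 : HasDerivAt (fun α : ℝ => α ^ 4 * A) (4 * x ^ 3 * A) x := by
      simpa using (hasDerivAt_pow 4 x).mul_const A
    have hs : HasDerivAt (fun α : ℝ => 1 - α) (-1) x := by
      simpa using (hasDerivAt_id x).const_sub (1 : ℝ)
    have h2 : HasDerivAt (fun α : ℝ => (1 - α) ^ 4 * c) (-4 * (1 - x) ^ 3 * c) x := by
      have := (hs.pow 4).mul_const c
      exact this.congr_deriv (by ring)
    have h3 : HasDerivAt (fun α : ℝ => 2 * α ^ 2 * (1 - α) ^ 2 * d)
        ((4 * x * (1 - x) ^ 2 - 4 * x ^ 2 * (1 - x)) * d) x := by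
      have hp : HasDerivAt (fun α : ℝ => 2 * α ^ 2) (4 * x) x := by
        have := (hasDerivAt_pow 2 x).const_mul (2 : ℝ)
        exact this.congr_deriv (by ring)
      have hq : HasDerivAt (fun α : ℝ => (1 - α) ^ 2) (-2 * (1 - x)) x := by
        have := hs.pow 2
        exact this.congr_deriv (by ring)
      have := (hp.mul hq).mul_const d
      exact this.congr_deriv (by ring)
    have := (h1.add h2).add h3
    exact this.congr_deriv (by ring)
  have hder2 : ∀ x : ℝ, HasDerivAt
      (fun x : ℝ => 4 * x ^ 3 * A - 4 * (1 - x) ^ 3 * c + (4 * x - 12 * x ^ 2 + 8 * x ^ 3) * d)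
      (12 * x ^ 2 * A + 12 * (1 - x) ^ 2 * c + (4 - 24 * x + 24 * x ^ 2) * d) x := by
    intro x
    have h1 : HasDerivAt (fun α : ℝ => 4 * α ^ 3 * A) (12 * x ^ 2 * A) x := by
      have := ((hasDerivAt_pow 3 x).const_mul (4 : ℝ)).mul_const A
      exact this.congr_deriv (by ring)
    have hs : HasDerivAt (fun α : ℝ => 1 - α) (-1) x := by
      simpa using (hasDerivAt_id x).const_sub (1 : ℝ)
    have h2 : HasDerivAt (fun α : ℝ => 4 * (1 - α) ^ 3 * c) (-12 * (1 - x) ^ 2 * c) x := by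
      have := ((hs.pow 3).const_mul (4 : ℝ)).mul_const c
      exact this.congr_deriv (by ring)
    have h3 : HasDerivAt (fun α : ℝ => (4 * α - 12 * α ^ 2 + 8 * α ^ 3) * d)
        ((4 - 24 * x + 24 * x ^ 2) * d) x := by
      have hq : HasDerivAt (fun α : ℝ => 4 * α - 12 * α ^ 2 + 8 * α ^ 3)
          (4 - 24 * x + 24 * x ^ 2) x := by
        have h4 : HasDerivAt (fun α : ℝ => 4 * α) 4 x := by
          simpa using (hasDerivAt_id x).const_mul (4 : ℝ)
        have h5 : HasDerivAt (fun α : ℝ => 12 * α ^ 2) (24 * x) x := by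
          have := (hasDerivAt_pow 2 x).const_mul (12 : ℝ)
          exact this.congr_deriv (by ring)
        have h6 : HasDerivAt (fun α : ℝ => 8 * α ^ 3) (24 * x ^ 2) x := by
          have := (hasDerivAt_pow 3 x).const_mul (8 : ℝ)
          exact this.congr_deriv (by ring)
        have := (h4.sub h5).add h6
        exact this.congr_deriv (by ring)
      exact hq.mul_const d
    have := (h1.sub h2).add h3
    exact this.congr_deriv (by ring)
  apply convexOn_of_hasDerivWithinAt2_nonneg (f' := fun x =>
      4 * x ^ 3 * A - 4 * (1 - x) ^ 3 * c + (4 * x - 12 * x ^ 2 + 8 * x ^ 3) * d)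
    (f'' := fun x => 12 * x ^ 2 * A + 12 * (1 - x) ^ 2 * c + (4 - 24 * x + 24 * x ^ 2) * d)
    (convex_Icc 0 1)
  · exact Continuous.continuousOn (by continuity)
  · intro x _; exact (hder1 x).hasDerivWithinAt
  · intro x _; exact (hder2 x).hasDerivWithinAt
  · intro x hx
    rw [interior_Icc] at hx
    obtain ⟨hx0, hx1⟩ := hx
    have key : 24 * x * (1 - x) * d ≤ 12 * x ^ 2 * A + 12 * (1 - x) ^ 2 * c := by
      have := amgm_aux (12 * x ^ 2 * A) (12 * (1 - x) ^ 2 * c) (12 * x * (1 - x) * d)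
        (by positivity) (by positivity)
        (mul_nonneg (mul_nonneg (by positivity) (by linarith : (0:ℝ) ≤ 1 - x)) hd0.le)
        (by nlinarith [mul_nonneg (sq_nonneg (x * (1 - x))) (by nlinarith : (0:ℝ) ≤ A * c - d ^ 2)])
      linarith
    nlinarith [hd0.le]
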